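/- Let C₀ be symmetric positive definite, C₀AᵀΓ⁻¹A = S D S⁻¹ with D = diag(μ₁,…,μ_k,0,…,0), E_∞ = diag(0,…,0,1,…,1), C_∞ = S E_∞ S⁻¹ C₀, and define x† := x₀ + (E − C_∞C₀⁻¹)(u† − x₀). Then A x† = A u†, and among all x ∈ ℝⁿ with Ax = Au†, x† uniquely minimizes the weighted norm ‖x − x₀‖_{C₀} := ⟨x−x₀, C₀⁻¹(x−x₀)⟩^{1/2}. -/

import Mathlib

open Matrix

private lemma dot_mulVec_left' {a b : ℕ} (B : Matrix (Fin a) (Fin b) ℝ)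
    (v : Fin b → ℝ) (u : Fin a → ℝ) : (B *ᵥ v) ⬝ᵥ u = v ⬝ᵥ (Bᵀ *ᵥ u) := by
  rw [dotProduct_comm, Matrix.dotProduct_mulVec, ← Matrix.mulVec_transpose,
    dotProduct_comm]

theorem minimal_norm_limit {n m k : ℕ} (hk : k ≤ n)
    (C₀ : Matrix (Fin n) (Fin n) ℝ) (hC₀ : C₀.PosDef)
    (A : Matrix (Fin m) (Fin n) ℝ)
    (Γ : Matrix (Fin m) (Fin m) ℝ) (hΓ : Γ.PosDef)
    (S : Matrix (Fin n) (Fin n) ℝ) (μ : Fin n → ℝ)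
    (hS : IsUnit S.det)
    (hμpos : ∀ i : Fin n, (i : ℕ) < k → 0 < μ i)
    (hμzero : ∀ i : Fin n, k ≤ (i : ℕ) → μ i = 0)
    (hdiag : C₀ * Aᵀ * Γ⁻¹ * A = S * Matrix.diagonal μ * S⁻¹)
    (Einf : Matrix (Fin n) (Fin n) ℝ)
    (hEinf : Einf = Matrix.diagonal (fun i : Fin n => if (i : ℕ) < k then (0 : ℝ) else 1))
    (Cinf : Matrix (Fin n) (Fin n) ℝ) (hCinf : Cinf = S * Einf * S⁻¹ * C₀)
    (x₀ udag : Fin n → ℝ) (xdag : Fin n → ℝ)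
    (hxdag : xdag = x₀ + (1 - Cinf * C₀⁻¹) *ᵥ (udag - x₀)) :
    A *ᵥ xdag = A *ᵥ udag ∧
    ∀ x : Fin n → ℝ, A *ᵥ x = A *ᵥ udag →
      Real.sqrt ((xdag - x₀) ⬝ᵥ (C₀⁻¹ *ᵥ (xdag - x₀))) ≤
        Real.sqrt ((x - x₀) ⬝ᵥ (C₀⁻¹ *ᵥ (x - x₀))) ∧
      (x ≠ xdag →
        Real.sqrt ((xdag - x₀) ⬝ᵥ (C₀⁻¹ *ᵥ (xdag - x₀))) <
          Real.sqrt ((x - x₀) ⬝ᵥ (C₀⁻¹ *ᵥ (x - x₀)))) := by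
  have hC₀d : IsUnit C₀.det := hC₀.det_pos.ne'.isUnit
  have hC₀inv : C₀ * C₀⁻¹ = 1 := Matrix.mul_nonsing_inv _ hC₀d
  have hC₀inv' : C₀⁻¹ * C₀ = 1 := Matrix.nonsing_inv_mul _ hC₀d
  have hSinv : S * S⁻¹ = 1 := Matrix.mul_nonsing_inv _ hS
  have hSinv' : S⁻¹ * S = 1 := Matrix.nonsing_inv_mul _ hS
  have hC₀symm : C₀ᵀ = C₀ := hC₀.isHermitian.eq
  have hΓsymm : Γᵀ = Γ := hΓ.isHermitian.eq
  have hC₀isymm : (C₀⁻¹)ᵀ = C₀⁻¹ := by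
    rw [Matrix.transpose_nonsing_inv, hC₀symm]
  have hΓisymm : (Γ⁻¹)ᵀ = Γ⁻¹ := by
    rw [Matrix.transpose_nonsing_inv, hΓsymm]
  -- conjugation multiplication helper
  have hconj : ∀ X Y : Matrix (Fin n) (Fin n) ℝ,
      (S * X * S⁻¹) * (S * Y * S⁻¹) = S * (X * Y) * S⁻¹ := by
    intro X Y
    have h1 : S⁻¹ * (S * (Y * S⁻¹)) = Y * S⁻¹ := by
      rw [← Matrix.mul_assoc, hSinv', Matrix.one_mul]
    simp only [Matrix.mul_assoc, h1]
  obtain ⟨e, he⟩ : ∃ e : Fin n → ℝ, e = fun i : Fin n => if (i : ℕ) < k then (0 : ℝ) else 1 := ⟨_, rfl⟩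
  obtain ⟨P, hP⟩ : ∃ P, P = S * Matrix.diagonal e * S⁻¹ := ⟨_, rfl⟩
  obtain ⟨N, hN⟩ : ∃ N, N = Aᵀ * Γ⁻¹ * A := ⟨_, rfl⟩
  obtain ⟨M, hM⟩ : ∃ M, M = S * Matrix.diagonal μ * S⁻¹ := ⟨_, rfl⟩
  have hPC : Cinf * C₀⁻¹ = P := by
    rw [hCinf, hEinf, ← he, hP,
      Matrix.mul_assoc (S * Matrix.diagonal e * S⁻¹) C₀ C₀⁻¹, hC₀inv, Matrix.mul_one]
  have hee : (fun i => e i * e i) = e := by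
    funext i; by_cases h : (i : ℕ) < k <;> simp [he, h]
  have hPP : P * P = P := by
    rw [hP, hconj, Matrix.diagonal_mul_diagonal, hee]
  have hμe : (fun i => μ i * e i) = fun _ => (0 : ℝ) := by
    funext i
    by_cases h : (i : ℕ) < k
    · simp [he, h]
    · simp [he, h, hμzero i (le_of_not_gt h)]
  have hMP : M * P = 0 := by
    rw [hM, hP, hconj, Matrix.diagonal_mul_diagonal, hμe]
    simp
  have hCN : C₀ * N = M := by
    rw [hN, hM, ← hdiag]
    simp only [Matrix.mul_assoc]
  have hNM : N = C₀⁻¹ * M := by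
    rw [← hCN, ← Matrix.mul_assoc, hC₀inv', Matrix.one_mul]
  have hNP : N * P = 0 := by
    rw [hNM, Matrix.mul_assoc, hMP, Matrix.mul_zero]
  have hNsymm : Nᵀ = N := by
    rw [hN]
    rw [Matrix.transpose_mul, Matrix.transpose_mul, Matrix.transpose_transpose, hΓisymm]
    simp only [Matrix.mul_assoc]
  -- A * (P v) = 0 for every v
  have hAP : ∀ v : Fin n → ℝ, A *ᵥ (P *ᵥ v) = 0 := by
    intro v
    have hq : (A *ᵥ (P *ᵥ v)) ⬝ᵥ (Γ⁻¹ *ᵥ (A *ᵥ (P *ᵥ v))) = 0 := by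
      rw [dot_mulVec_left' A (P *ᵥ v) (Γ⁻¹ *ᵥ (A *ᵥ (P *ᵥ v)))]
      rw [Matrix.mulVec_mulVec, Matrix.mulVec_mulVec, Matrix.mulVec_mulVec]
      rw [show Aᵀ * Γ⁻¹ * A * P = N * P by rw [hN], hNP]
      simp
    by_contra hy0
    have := hΓ.inv.dotProduct_mulVec_pos hy0
    simp only [star_trivial] at this
    rw [hq] at this
    exact lt_irrefl 0 this
  -- P fixes kernel vectors of A
  have hker : ∀ ξ : Fin n → ℝ, A *ᵥ ξ = 0 → P *ᵥ ξ = ξ := by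
    intro ξ hξ
    have hNξ : N *ᵥ ξ = 0 := by
      rw [hN, ← Matrix.mulVec_mulVec, ← Matrix.mulVec_mulVec, hξ]
      simp
    have hMξ : M *ᵥ ξ = 0 := by
      rw [← hCN, ← Matrix.mulVec_mulVec, hNξ]; simp
    have hDξ : Matrix.diagonal μ *ᵥ (S⁻¹ *ᵥ ξ) = 0 := by
      have h1 : S⁻¹ *ᵥ (M *ᵥ ξ) = 0 := by rw [hMξ]; simp
      rw [hM] at h1
      rw [Matrix.mulVec_mulVec] at h1 ⊢
      rw [show S⁻¹ * (S * Matrix.diagonal μ * S⁻¹) = Matrix.diagonal μ * S⁻¹ by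
        simp only [Matrix.mul_assoc]
        rw [← Matrix.mul_assoc S⁻¹ S, hSinv', Matrix.one_mul]] at h1
      rw [← Matrix.mulVec_mulVec] at h1 ⊢
      exact h1
    have hEξ : Matrix.diagonal e *ᵥ (S⁻¹ *ᵥ ξ) = S⁻¹ *ᵥ ξ := by
      funext i
      have hDi : μ i * (S⁻¹ *ᵥ ξ) i = 0 := by
        have := congrFun hDξ i
        simpa [Matrix.mulVec_diagonal] using this
      by_cases h : (i : ℕ) < k
      · have h0 : (S⁻¹ *ᵥ ξ) i = 0 := by
          rcases mul_eq_zero.mp hDi with h' | h'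
          · exact absurd h' (hμpos i h).ne'
          · exact h'
        simp [Matrix.mulVec_diagonal, he, h, h0]
      · simp [Matrix.mulVec_diagonal, he, h]
    rw [hP, ← Matrix.mulVec_mulVec, ← Matrix.mulVec_mulVec, hEξ, Matrix.mulVec_mulVec,
      hSinv, Matrix.one_mulVec]
  -- orthogonality
  have horth : (1 - P)ᵀ * C₀⁻¹ * P = 0 := by
    obtain ⟨μp, hμp⟩ : ∃ μp : Fin n → ℝ, μp = fun i : Fin n => if (i : ℕ) < k then (μ i)⁻¹ else 0 :=
      ⟨_, rfl⟩
    obtain ⟨Q, hQ⟩ : ∃ Q, Q = S * Matrix.diagonal μp * S⁻¹ := ⟨_, rfl⟩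
    have h1 : (fun i => μ i * μp i) = fun i => 1 - e i := by
      funext i
      by_cases h : (i : ℕ) < k
      · simp [hμp, he, h, mul_inv_cancel₀ (hμpos i h).ne']
      · simp [hμp, he, h, hμzero i (le_of_not_gt h)]
    have hMQ : M * Q = 1 - P := by
      rw [hM, hQ, hconj, Matrix.diagonal_mul_diagonal, h1, hP]
      have h2 : Matrix.diagonal (fun i => 1 - e i) = 1 - Matrix.diagonal e := by
        rw [← Matrix.diagonal_one, ← Matrix.diagonal_sub]
      rw [h2, Matrix.mul_sub, Matrix.sub_mul, Matrix.mul_one, hSinv]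
    have key : Pᵀ * (C₀⁻¹ * (1 - P)) = 0 := by
      rw [← hMQ, ← hCN]
      have h3 : C₀⁻¹ * (C₀ * N * Q) = N * Q := by
        simp only [Matrix.mul_assoc]
        rw [← Matrix.mul_assoc C₀⁻¹ C₀, hC₀inv', Matrix.one_mul]
      rw [h3, ← Matrix.mul_assoc]
      have h4 : Pᵀ * N = (N * P)ᵀ := by
        rw [show (N * P)ᵀ = Pᵀ * Nᵀ from Matrix.transpose_mul N P, hNsymm]
      rw [h4, hNP, Matrix.transpose_zero, Matrix.zero_mul]
    have h5 : ((1 - P)ᵀ * C₀⁻¹ * P)ᵀ = Pᵀ * (C₀⁻¹ * (1 - P)) := by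
      simp only [Matrix.transpose_mul, Matrix.transpose_transpose, hC₀isymm, Matrix.mul_assoc]
    have h6 : ((1 - P)ᵀ * C₀⁻¹ * P)ᵀ = 0 := by rw [h5, key]
    calc (1 - P)ᵀ * C₀⁻¹ * P = (((1 - P)ᵀ * C₀⁻¹ * P)ᵀ)ᵀ := by rw [Matrix.transpose_transpose]
      _ = 0 := by rw [h6, Matrix.transpose_zero]
  have hxdagw : xdag - x₀ = (1 - P) *ᵥ (udag - x₀) := by
    rw [hxdag, hPC]; abel
  have part1 : A *ᵥ xdag = A *ᵥ udag := by
    have h1 : xdag = udag - P *ᵥ (udag - x₀) := by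
      rw [hxdag, hPC, Matrix.sub_mulVec, Matrix.one_mulVec]
      funext i; simp; abel
    rw [h1, Matrix.mulVec_sub, hAP (udag - x₀)]
    simp
  refine ⟨part1, ?_⟩
  intro x hx
  have hAξ : A *ᵥ (x - xdag) = 0 := by
    rw [Matrix.mulVec_sub, hx, part1, sub_self]
  have hPξ : P *ᵥ (x - xdag) = x - xdag := hker _ hAξ
  have hPd : P *ᵥ (x - x₀) = x - xdag := by
    have h1 : x - x₀ = (xdag - x₀) + (x - xdag) := by abel
    rw [h1, Matrix.mulVec_add, hPξ, hxdagw, Matrix.mulVec_mulVec]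
    have h2 : P * (1 - P) = 0 := by rw [Matrix.mul_sub, Matrix.mul_one, hPP, sub_self]
    rw [h2]; simp
  have hsplit : x - x₀ = (xdag - x₀) + P *ᵥ (x - x₀) := by rw [hPd]; abel
  have hdstar : xdag - x₀ = (1 - P) *ᵥ (x - x₀) := by
    rw [Matrix.sub_mulVec, Matrix.one_mulVec, hPd]; abel
  have hcross : (xdag - x₀) ⬝ᵥ (C₀⁻¹ *ᵥ (P *ᵥ (x - x₀))) = 0 := by
    rw [hdstar, dot_mulVec_left', Matrix.mulVec_mulVec, Matrix.mulVec_mulVec, horth]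
    simp
  have hcross' : (P *ᵥ (x - x₀)) ⬝ᵥ (C₀⁻¹ *ᵥ (xdag - x₀)) = 0 := by
    rw [Matrix.dotProduct_mulVec, ← Matrix.mulVec_transpose, hC₀isymm, dotProduct_comm]
    exact hcross
  have hqd : (x - x₀) ⬝ᵥ (C₀⁻¹ *ᵥ (x - x₀)) =
      (xdag - x₀) ⬝ᵥ (C₀⁻¹ *ᵥ (xdag - x₀))
        + (P *ᵥ (x - x₀)) ⬝ᵥ (C₀⁻¹ *ᵥ (P *ᵥ (x - x₀))) := by
    conv_lhs => rw [hsplit]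
    simp only [Matrix.mulVec_add, dotProduct_add, add_dotProduct]
    rw [hcross, hcross']
    ring
  have hqPd : 0 ≤ (P *ᵥ (x - x₀)) ⬝ᵥ (C₀⁻¹ *ᵥ (P *ᵥ (x - x₀))) := by
    have := hC₀.inv.posSemidef.re_dotProduct_nonneg (P *ᵥ (x - x₀))
    simpa using this
  have hq0 : 0 ≤ (xdag - x₀) ⬝ᵥ (C₀⁻¹ *ᵥ (xdag - x₀)) := by
    have := hC₀.inv.posSemidef.re_dotProduct_nonneg (xdag - x₀)
    simpa using this
  have hle : (xdag - x₀) ⬝ᵥ (C₀⁻¹ *ᵥ (xdag - x₀)) ≤ (x - x₀) ⬝ᵥ (C₀⁻¹ *ᵥ (x - x₀)) := by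
    rw [hqd]; linarith
  constructor
  · exact Real.sqrt_le_sqrt hle
  · intro hne
    have hPd0 : P *ᵥ (x - x₀) ≠ 0 := by
      rw [hPd]
      intro h0
      apply hne
      have := sub_eq_zero.mp h0
      exact this
    have hqPd' : 0 < (P *ᵥ (x - x₀)) ⬝ᵥ (C₀⁻¹ *ᵥ (P *ᵥ (x - x₀))) := by
      have := hC₀.inv.dotProduct_mulVec_pos hPd0
      simpa using this
    have hlt : (xdag - x₀) ⬝ᵥ (C₀⁻¹ *ᵥ (xdag - x₀)) < (x - x₀) ⬝ᵥ (C₀⁻¹ *ᵥ (x - x₀)) := by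
      rw [hqd]; linarith
    exact Real.sqrt_lt_sqrt hq0 hlt
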